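/- Let G be a (dicot) game such that G + Ḡ has misère outcome N and, for every follower H of G, H + H̄ has misère outcome N. Then G + Ḡ ≡ 0 modulo the universe of dicot games: o⁻(G + Ḡ + X) = o⁻(X) for all dicot games X. -/

import Mathlib

namespace SetTheory

universe u

/-- Pre-games, as formerly in Mathlib (`SetTheory.PGame`, removed since). -/
inductive PGame : Type (u + 1)
  | mk : ∀ α β : Type u, (α → PGame) → (β → PGame) → PGame

namespace PGame

/-- The indexing type for allowable moves by Left. -/
def LeftMoves : PGame → Type u
  | mk l _ _ _ => l

/-- The indexing type for allowable moves by Right. -/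
def RightMoves : PGame → Type u
  | mk _ r _ _ => r

/-- The new game after Left makes an allowed move. -/
def moveLeft : ∀ g : PGame, LeftMoves g → PGame
  | mk _l _ L _ => L

/-- The new game after Right makes an allowed move. -/
def moveRight : ∀ g : PGame, RightMoves g → PGame
  | mk _ _r _ R => R

/-- `IsOption x y` means that `x` is either a left or right option for `y`. -/
inductive IsOption : PGame → PGame → Prop
  | moveLeft {x : PGame} (i : x.LeftMoves) : IsOption (x.moveLeft i) x
  | moveRight {x : PGame} (i : x.RightMoves) : IsOption (x.moveRight i) x

/-- `Subsequent x y` says that `x` can be obtained by playing some nonempty sequence of moves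
from `y`. -/
def Subsequent : PGame → PGame → Prop :=
  Relation.TransGen IsOption

/-- The negation of a pre-game: swap Left and Right recursively. -/
def neg : PGame → PGame
  | ⟨l, r, L, R⟩ => ⟨r, l, fun i => neg (R i), fun i => neg (L i)⟩

instance : Neg PGame :=
  ⟨neg⟩

/-- The sum of `x = {xL | xR}` and `y = {yL | yR}` is `{xL + y, x + yL | xR + y, x + yR}`. -/
noncomputable instance : Add PGame.{u} :=
  ⟨fun x y => by
    induction x generalizing y with | mk xl xr _ _ IHxl IHxr => _
    induction y with | mk yl yr yL yR IHyl IHyr => _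
    have y := mk yl yr yL yR
    refine ⟨xl ⊕ yl, xr ⊕ yr, Sum.rec ?_ ?_, Sum.rec ?_ ?_⟩
    · exact fun i => IHxl i y
    · exact IHyl
    · exact fun i => IHxr i y
    · exact IHyr⟩

end PGame

end SetTheory

namespace SetTheory
namespace PGame

universe w

@[elab_as_elim]
noncomputable def moveRecOn {C : PGame → Sort*} (x : PGame)
    (IH : ∀ y : PGame, (∀ i, C (y.moveLeft i)) → (∀ j, C (y.moveRight j)) → C y) : C x :=
  PGame.recOn x fun yl yr yL yR ihL ihR => IH (mk yl yr yL yR) ihL ihR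

theorem leftMoves_add : ∀ x y : PGame.{w}, (x + y).LeftMoves = (x.LeftMoves ⊕ y.LeftMoves)
  | mk _ _ _ _, mk _ _ _ _ => rfl

theorem rightMoves_add : ∀ x y : PGame.{w}, (x + y).RightMoves = (x.RightMoves ⊕ y.RightMoves)
  | mk _ _ _ _, mk _ _ _ _ => rfl

def toLeftMovesAdd {x y : PGame.{w}} : x.LeftMoves ⊕ y.LeftMoves ≃ (x + y).LeftMoves :=
  Equiv.cast (leftMoves_add x y).symm

def toRightMovesAdd {x y : PGame.{w}} : x.RightMoves ⊕ y.RightMoves ≃ (x + y).RightMoves :=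
  Equiv.cast (rightMoves_add x y).symm

theorem add_moveLeft_inl {x y : PGame.{w}} (i : x.LeftMoves) :
    (x + y).moveLeft (toLeftMovesAdd (Sum.inl i)) = x.moveLeft i + y := by
  cases x; cases y; rfl

theorem add_moveLeft_inr {x y : PGame.{w}} (i : y.LeftMoves) :
    (x + y).moveLeft (toLeftMovesAdd (Sum.inr i)) = x + y.moveLeft i := by
  cases x; cases y; rfl

theorem add_moveRight_inl {x y : PGame.{w}} (i : x.RightMoves) :
    (x + y).moveRight (toRightMovesAdd (Sum.inl i)) = x.moveRight i + y := by
  cases x; cases y; rfl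

theorem add_moveRight_inr {x y : PGame.{w}} (i : y.RightMoves) :
    (x + y).moveRight (toRightMovesAdd (Sum.inr i)) = x + y.moveRight i := by
  cases x; cases y; rfl

theorem neg_def {xl xr : Type w} {xL : xl → PGame.{w}} {xR : xr → PGame.{w}} :
    -(mk xl xr xL xR) = mk xr xl (fun j => -xR j) (fun i => -xL i) := rfl

theorem negNegAux (x : PGame.{w}) : - -x = x := by
  induction x with
  | mk xl xr xL xR ihL ihR =>
    rw [neg_def, neg_def]
    simp only [ihL, ihR]

instance : InvolutiveNeg PGame.{w} := { (inferInstance : Neg PGame.{w}) with neg_neg := negNegAux }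

theorem leftMoves_neg : ∀ x : PGame.{w}, (-x).LeftMoves = x.RightMoves
  | mk _ _ _ _ => rfl

theorem rightMoves_neg : ∀ x : PGame.{w}, (-x).RightMoves = x.LeftMoves
  | mk _ _ _ _ => rfl

def toLeftMovesNeg {x : PGame.{w}} : x.RightMoves ≃ (-x).LeftMoves :=
  Equiv.cast (leftMoves_neg x).symm

def toRightMovesNeg {x : PGame.{w}} : x.LeftMoves ≃ (-x).RightMoves :=
  Equiv.cast (rightMoves_neg x).symm

theorem moveLeft_neg {x : PGame.{w}} (i : x.RightMoves) :
    (-x).moveLeft (toLeftMovesNeg i) = -x.moveRight i := by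
  cases x; rfl

theorem moveRight_neg' {x : PGame.{w}} (i : (-x).RightMoves) :
    (-x).moveRight i = -x.moveLeft (toRightMovesNeg.symm i) := by
  cases x; rfl

theorem Subsequent.trans {x y z : PGame.{w}} (h₁ : Subsequent x y) (h₂ : Subsequent y z) :
    Subsequent x z :=
  Relation.TransGen.trans h₁ h₂

theorem Subsequent.moveLeft {x : PGame.{w}} (i : x.LeftMoves) : Subsequent (x.moveLeft i) x :=
  Relation.TransGen.single (IsOption.moveLeft i)

theorem Subsequent.moveRight {x : PGame.{w}} (j : x.RightMoves) : Subsequent (x.moveRight j) x :=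
  Relation.TransGen.single (IsOption.moveRight j)

inductive Relabelling : PGame.{w} → PGame.{w} → Type (w + 1)
  | mk : ∀ {x y : PGame.{w}} (L : x.LeftMoves ≃ y.LeftMoves) (R : x.RightMoves ≃ y.RightMoves),
      (∀ i, Relabelling (x.moveLeft i) (y.moveLeft (L i))) →
        (∀ j, Relabelling (x.moveRight j) (y.moveRight (R j))) → Relabelling x y

infixl:50 " ≡r " => SetTheory.PGame.Relabelling

noncomputable def Relabelling.refl (x : PGame.{w}) : x ≡r x := by
  induction x with
  | mk xl xr xL xR ihL ihR => exact ⟨Equiv.refl _, Equiv.refl _, ihL, ihR⟩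

noncomputable def Relabelling.trans : ∀ {x y z : PGame.{w}}, x ≡r y → y ≡r z → x ≡r z
  | _, _, _, ⟨L₁, R₁, hL₁, hR₁⟩, ⟨L₂, R₂, hL₂, hR₂⟩ =>
    ⟨L₁.trans L₂, R₁.trans R₂, fun i => (hL₁ i).trans (hL₂ (L₁ i)),
      fun j => (hR₁ j).trans (hR₂ (R₁ j))⟩

noncomputable def Relabelling.addCongr {a b c d : PGame.{w}} (h₁ : a ≡r b) (h₂ : c ≡r d) :
    a + c ≡r b + d := by
  induction a generalizing b c d with
  | mk al ar aL aR ihaL ihaR =>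
  induction c generalizing d with
  | mk cl cr cL cR ihcL ihcR =>
  cases b with | mk bl br bL bR => ?_
  cases d with | mk dl dr dL dR => ?_
  cases h₁ with | mk L₁ R₁ hL₁ hR₁ => ?_
  cases h₂ with | mk L₂ R₂ hL₂ hR₂ => ?_
  refine ⟨Equiv.sumCongr L₁ L₂, Equiv.sumCongr R₁ R₂, ?_, ?_⟩ <;> rintro (i | j)
  · exact ihaL i (hL₁ i) (Relabelling.mk L₂ R₂ hL₂ hR₂)
  · exact ihcL j (hL₂ j)
  · exact ihaR i (hR₁ i) (Relabelling.mk L₂ R₂ hL₂ hR₂)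
  · exact ihcR j (hR₂ j)

noncomputable def negAddRelabelling (a c : PGame.{w}) : -(a + c) ≡r -a + -c := by
  induction a generalizing c with
  | mk al ar aL aR ihaL ihaR =>
  induction c with
  | mk cl cr cL cR ihcL ihcR =>
  refine ⟨Equiv.refl _, Equiv.refl _, ?_, ?_⟩ <;> rintro (i | j)
  · exact ihaR i _
  · exact ihcR j
  · exact ihaL i _
  · exact ihcL j

noncomputable def addCommRelabelling (a c : PGame.{w}) : a + c ≡r c + a := by
  induction a generalizing c with
  | mk al ar aL aR ihaL ihaR =>
  induction c with
  | mk cl cr cL cR ihcL ihcR =>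
  refine ⟨Equiv.sumComm _ _, Equiv.sumComm _ _, ?_, ?_⟩ <;> rintro (i | j)
  · exact ihaL i _
  · exact ihcL j
  · exact ihaR i _
  · exact ihcR j

end PGame
end SetTheory

open SetTheory

namespace Misere

/-- Misère winning: `(wins G).1` means Left, moving first on `G`, wins under misère play;
`(wins G).2` means Right, moving first, wins. The player unable to move wins. -/
def wins : PGame → Prop × Prop
  | ⟨α, β, L, R⟩ =>
    (IsEmpty α ∨ ∃ i, ¬ (wins (L i)).2,
     IsEmpty β ∨ ∃ j, ¬ (wins (R j)).1)

/-- Left wins moving first under misère play. -/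
def LeftFirst (G : PGame) : Prop := (wins G).1

/-- Right wins moving first under misère play. -/
def RightFirst (G : PGame) : Prop := (wins G).2

/-- Normal-play winning: `(nwins G).1` means Left moving first wins (player unable to move loses). -/
def nwins : PGame → Prop × Prop
  | ⟨α, β, L, R⟩ =>
    (∃ i, ¬ (nwins (L i)).2,
     ∃ j, ¬ (nwins (R j)).1)

/-- Outcome classes. -/
inductive Outcome : Type
  | L | R | N | P
  deriving DecidableEq

/-- The partial order on outcomes: L > P > R, L > N > R, with P and N incomparable. -/
instance : LE Outcome := ⟨fun a b => a = b ∨ a = .R ∨ b = .L⟩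

open Classical in
/-- The misère outcome of a game. -/
noncomputable def misereOutcome (G : PGame) : Outcome :=
  if (wins G).1 then (if (wins G).2 then .N else .L)
  else (if (wins G).2 then .R else .P)

open Classical in
/-- The normal-play outcome of a game. -/
noncomputable def normalOutcome (G : PGame) : Outcome :=
  if (nwins G).1 then (if (nwins G).2 then .N else .L)
  else (if (nwins G).2 then .R else .P)

/-- A game is dicot if every subposition has a Left option iff it has a Right option. -/
def Dicot : PGame → Prop
  | ⟨α, β, L, R⟩ => (IsEmpty α ↔ IsEmpty β) ∧ (∀ i, Dicot (L i)) ∧ (∀ j, Dicot (R j))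

/-- A dead Left end: a Left end all of whose followers are Left ends. -/
def DeadLeftEnd : PGame → Prop
  | ⟨α, _β, _L, R⟩ => IsEmpty α ∧ ∀ j, DeadLeftEnd (R j)

/-- A dead Right end: a Right end all of whose followers are Right ends. -/
def DeadRightEnd : PGame → Prop
  | ⟨_α, β, L, _R⟩ => IsEmpty β ∧ ∀ i, DeadRightEnd (L i)

/-- A follower of `G` is any position reachable from `G`, including `G` itself. -/
def Follower (H G : PGame) : Prop := H = G ∨ PGame.Subsequent H G

/-- An end: a position where some player has no move. -/
def IsEnd (G : PGame) : Prop := IsEmpty G.LeftMoves ∨ IsEmpty G.RightMoves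

/-- A game is dead-ending if every one of its end followers is a dead end. -/
def DeadEnding (G : PGame) : Prop :=
  ∀ H, Follower H G → IsEnd H → (DeadLeftEnd H ∨ DeadRightEnd H)

section Aux
open PGame

theorem wins_def (x : PGame) : wins x =
    (IsEmpty x.LeftMoves ∨ ∃ i, ¬ (wins (x.moveLeft i)).2,
     IsEmpty x.RightMoves ∨ ∃ j, ¬ (wins (x.moveRight j)).1) := by
  cases x
  rw [wins]
  rfl

theorem leftFirst_iff {x : PGame} :
    LeftFirst x ↔ IsEmpty x.LeftMoves ∨ ∃ i, ¬ RightFirst (x.moveLeft i) := by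
  rw [LeftFirst, wins_def]
  rfl

theorem rightFirst_iff {x : PGame} :
    RightFirst x ↔ IsEmpty x.RightMoves ∨ ∃ j, ¬ LeftFirst (x.moveRight j) := by
  rw [RightFirst, wins_def]
  rfl

theorem leftFirst_add_iff {x y : PGame} :
    LeftFirst (x + y) ↔
      (IsEmpty x.LeftMoves ∧ IsEmpty y.LeftMoves) ∨
      (∃ i, ¬ RightFirst (x.moveLeft i + y)) ∨
      (∃ j, ¬ RightFirst (x + y.moveLeft j)) := by
  rw [leftFirst_iff]
  constructor
  · rintro (he | ⟨i, hi⟩)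
    · rw [leftMoves_add, isEmpty_sum] at he
      exact Or.inl he
    · obtain ⟨s, rfl⟩ : ∃ s, toLeftMovesAdd s = i :=
        ⟨toLeftMovesAdd.symm i, toLeftMovesAdd.apply_symm_apply i⟩
      cases s with
      | inl k => rw [add_moveLeft_inl] at hi; exact Or.inr (Or.inl ⟨k, hi⟩)
      | inr k => rw [add_moveLeft_inr] at hi; exact Or.inr (Or.inr ⟨k, hi⟩)
  · rintro (⟨h1, h2⟩ | ⟨i, hi⟩ | ⟨j, hj⟩)
    · refine Or.inl ?_
      rw [leftMoves_add, isEmpty_sum]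
      exact ⟨h1, h2⟩
    · exact Or.inr ⟨toLeftMovesAdd (Sum.inl i), by rwa [add_moveLeft_inl]⟩
    · exact Or.inr ⟨toLeftMovesAdd (Sum.inr j), by rwa [add_moveLeft_inr]⟩

theorem rightFirst_add_iff {x y : PGame} :
    RightFirst (x + y) ↔
      (IsEmpty x.RightMoves ∧ IsEmpty y.RightMoves) ∨
      (∃ i, ¬ LeftFirst (x.moveRight i + y)) ∨
      (∃ j, ¬ LeftFirst (x + y.moveRight j)) := by
  rw [rightFirst_iff]
  constructor
  · rintro (he | ⟨i, hi⟩)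
    · rw [rightMoves_add, isEmpty_sum] at he
      exact Or.inl he
    · obtain ⟨s, rfl⟩ : ∃ s, toRightMovesAdd s = i :=
        ⟨toRightMovesAdd.symm i, toRightMovesAdd.apply_symm_apply i⟩
      cases s with
      | inl k => rw [add_moveRight_inl] at hi; exact Or.inr (Or.inl ⟨k, hi⟩)
      | inr k => rw [add_moveRight_inr] at hi; exact Or.inr (Or.inr ⟨k, hi⟩)
  · rintro (⟨h1, h2⟩ | ⟨i, hi⟩ | ⟨j, hj⟩)
    · refine Or.inl ?_
      rw [rightMoves_add, isEmpty_sum]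
      exact ⟨h1, h2⟩
    · exact Or.inr ⟨toRightMovesAdd (Sum.inl i), by rwa [add_moveRight_inl]⟩
    · exact Or.inr ⟨toRightMovesAdd (Sum.inr j), by rwa [add_moveRight_inr]⟩

theorem wins_congr : ∀ {x y : PGame}, x ≡r y →
    ((wins x).1 ↔ (wins y).1) ∧ ((wins x).2 ↔ (wins y).2)
  | x, y, ⟨L, R, hL, hR⟩ => by
    rw [wins_def x, wins_def y]
    refine ⟨or_congr L.isEmpty_congr ⟨?_, ?_⟩, or_congr R.isEmpty_congr ⟨?_, ?_⟩⟩
    · rintro ⟨i, hi⟩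
      exact ⟨L i, fun hw => hi ((wins_congr (hL i)).2.mpr hw)⟩
    · rintro ⟨i, hi⟩
      refine ⟨L.symm i, fun hw => hi ?_⟩
      have := (wins_congr (hL (L.symm i))).2.mp hw
      rwa [L.apply_symm_apply] at this
    · rintro ⟨j, hj⟩
      exact ⟨R j, fun hw => hj ((wins_congr (hR j)).1.mpr hw)⟩
    · rintro ⟨j, hj⟩
      refine ⟨R.symm j, fun hw => hj ?_⟩
      have := (wins_congr (hR (R.symm j))).1.mp hw
      rwa [R.apply_symm_apply] at this

theorem wins_neg : ∀ x : PGame,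
    ((wins (-x)).1 ↔ (wins x).2) ∧ ((wins (-x)).2 ↔ (wins x).1)
  | ⟨α, β, L, R⟩ => by
    rw [neg_def, wins_def, wins_def ⟨α, β, L, R⟩]
    constructor
    · exact or_congr Iff.rfl (exists_congr fun j => not_congr (wins_neg (R j)).2)
    · exact or_congr Iff.rfl (exists_congr fun i => not_congr (wins_neg (L i)).1)

theorem wins_add_end (y : PGame) {x : PGame}
    (h1 : IsEmpty x.LeftMoves) (h2 : IsEmpty x.RightMoves) :
    (LeftFirst (y + x) ↔ LeftFirst y) ∧ (RightFirst (y + x) ↔ RightFirst y) := by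
  induction y using PGame.moveRecOn with
  | _ y ihl ihr =>
  constructor
  · rw [leftFirst_add_iff, leftFirst_iff]
    constructor
    · rintro (⟨a, _⟩ | ⟨i, hi⟩ | ⟨j, _⟩)
      · exact Or.inl a
      · exact Or.inr ⟨i, fun hw => hi ((ihl i).2.mpr hw)⟩
      · exact h1.elim j
    · rintro (a | ⟨i, hi⟩)
      · exact Or.inl ⟨a, h1⟩
      · exact Or.inr (Or.inl ⟨i, fun hw => hi ((ihl i).2.mp hw)⟩)
  · rw [rightFirst_add_iff, rightFirst_iff]
    constructor
    · rintro (⟨a, _⟩ | ⟨i, hi⟩ | ⟨j, _⟩)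
      · exact Or.inl a
      · exact Or.inr ⟨i, fun hw => hi ((ihr i).1.mpr hw)⟩
      · exact h2.elim j
    · rintro (a | ⟨i, hi⟩)
      · exact Or.inl ⟨a, h2⟩
      · exact Or.inr (Or.inl ⟨i, fun hw => hi ((ihr i).1.mp hw)⟩)

theorem dicot_def {x : PGame} : Dicot x ↔
    (IsEmpty x.LeftMoves ↔ IsEmpty x.RightMoves) ∧
    (∀ i, Dicot (x.moveLeft i)) ∧ ∀ j, Dicot (x.moveRight j) := by
  cases x
  rw [Dicot]
  rfl

theorem dicot_neg : ∀ (x : PGame), Dicot x → Dicot (-x)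
  | ⟨α, β, L, R⟩, h => by
    rw [Dicot] at h
    rw [neg_def, Dicot]
    exact ⟨h.1.symm, fun j => dicot_neg _ (h.2.2 j), fun i => dicot_neg _ (h.2.1 i)⟩

theorem Follower.moveLeft {H G : PGame} (h : Follower H G) (i : H.LeftMoves) :
    Follower (H.moveLeft i) G := by
  rcases h with rfl | h
  · exact Or.inr (Subsequent.moveLeft i)
  · exact Or.inr ((Subsequent.moveLeft i).trans h)

theorem Follower.moveRight {H G : PGame} (h : Follower H G) (j : H.RightMoves) :
    Follower (H.moveRight j) G := by
  rcases h with rfl | h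
  · exact Or.inr (Subsequent.moveRight j)
  · exact Or.inr ((Subsequent.moveRight j).trans h)

theorem misereOutcome_eq_N_iff {x : PGame} :
    misereOutcome x = Outcome.N ↔ (LeftFirst x ∧ RightFirst x) := by
  unfold misereOutcome
  split_ifs with h1 h2 <;> simp_all [LeftFirst, RightFirst]

theorem misereOutcome_congr {x y : PGame}
    (h1 : LeftFirst x ↔ LeftFirst y) (h2 : RightFirst x ↔ RightFirst y) :
    misereOutcome x = misereOutcome y := by
  unfold misereOutcome
  rw [show (wins x).1 = (wins y).1 from propext h1,
      show (wins x).2 = (wins y).2 from propext h2]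

theorem main (G : PGame) (hf : ∀ H : PGame, Follower H G → misereOutcome (H + -H) = Outcome.N) :
    ∀ H : PGame, ∀ X : PGame, Follower H G → Dicot X →
      (LeftFirst X → LeftFirst (H + -H + X)) ∧
      (¬ RightFirst X → ¬ RightFirst (H + -H + X)) := by
  intro H
  induction H using PGame.moveRecOn with
  | _ H ihHL ihHR =>
  intro X
  induction X using PGame.moveRecOn with
  | _ X ihXL ihXR =>
  intro hHG hX
  obtain ⟨hNL, hNR⟩ := misereOutcome_eq_N_iff.mp (hf H hHG)
  constructor
  · intro hL
    rcases leftFirst_iff.mp hL with he | ⟨i, hi⟩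
    · have he2 : IsEmpty X.RightMoves := (dicot_def.mp hX).1.mp he
      exact (wins_add_end (H + -H) he he2).1.mpr hNL
    · refine leftFirst_add_iff.mpr (Or.inr (Or.inr ⟨i, ?_⟩))
      exact (ihXL i hHG ((dicot_def.mp hX).2.1 i)).2 hi
  · intro hR hcon
    have hRX : ¬ IsEmpty X.RightMoves ∧ ∀ j, LeftFirst (X.moveRight j) := by
      rw [rightFirst_iff] at hR
      push_neg at hR
      exact ⟨not_isEmpty_iff.mpr hR.1, hR.2⟩
    rcases rightFirst_add_iff.mp hcon with ⟨_, hXe⟩ | ⟨k, hk⟩ | ⟨j, hj⟩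
    · exact hRX.1 hXe
    · obtain ⟨s, rfl⟩ : ∃ s, toRightMovesAdd s = k :=
        ⟨toRightMovesAdd.symm k, toRightMovesAdd.apply_symm_apply k⟩
      cases s with
      | inl jH =>
        rw [add_moveRight_inl] at hk
        apply hk
        refine leftFirst_add_iff.mpr
          (Or.inr (Or.inl ⟨toLeftMovesAdd (Sum.inr (toLeftMovesNeg jH)), ?_⟩))
        rw [add_moveLeft_inr, moveLeft_neg]
        exact fun hw => (ihHR jH X (hHG.moveRight jH) hX).2 hR hw
      | inr iN =>
        rw [add_moveRight_inr, moveRight_neg'] at hk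
        apply hk
        refine leftFirst_add_iff.mpr
          (Or.inr (Or.inl ⟨toLeftMovesAdd (Sum.inl (toRightMovesNeg.symm iN)), ?_⟩))
        rw [add_moveLeft_inl]
        exact fun hw =>
          (ihHL (toRightMovesNeg.symm iN) X (hHG.moveLeft _) hX).2 hR hw
    · exact hj ((ihXR j hHG ((dicot_def.mp hX).2.2 j)).1 (hRX.2 j))

theorem main' (G : PGame) (hf : ∀ H : PGame, Follower H G → misereOutcome (H + -H) = Outcome.N) :
    ∀ H : PGame, ∀ X : PGame, Follower H G → Dicot X →
      (RightFirst X → RightFirst (H + -H + X)) ∧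
      (¬ LeftFirst X → ¬ LeftFirst (H + -H + X)) := by
  intro H X hHG hX
  have r2 : (-H + -(-H)) ≡r H + -H := by
    rw [neg_neg]
    exact addCommRelabelling (-H) H
  have r : ∀ Z : PGame, -(H + -H + Z) ≡r H + -H + (-Z) := fun Z =>
    (negAddRelabelling (H + -H) Z).trans
      (Relabelling.addCongr ((negAddRelabelling H (-H)).trans r2) (Relabelling.refl (-Z)))
  have h1 : RightFirst (H + -H + X) ↔ LeftFirst (H + -H + (-X)) :=
    ((wins_neg (H + -H + X)).1.symm).trans (wins_congr (r X)).1
  have h2 : LeftFirst (H + -H + X) ↔ RightFirst (H + -H + (-X)) :=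
    ((wins_neg (H + -H + X)).2.symm).trans (wins_congr (r X)).2
  have m := main G hf H (-X) hHG (dicot_neg X hX)
  constructor
  · intro hRX
    exact h1.mpr (m.1 ((wins_neg X).1.mpr hRX))
  · intro hLX hcon
    exact m.2 (fun hw => hLX ((wins_neg X).2.mp hw)) (h2.mp hcon)

end Aux

end Misere

open Misere in
/-- McKay–Milley–Nowakowski: if `G` is dicot, `G + Ḡ` has misère outcome N,
and `H + H̄` has misère outcome N for every follower `H` of `G`, then `G + Ḡ ≡ 0` modulo
the universe of dicot games. -/
theorem invertibility_sufficient_dicot (G : PGame) (hG : Dicot G)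
    (h : misereOutcome (G + -G) = Outcome.N)
    (hf : ∀ H : PGame, Follower H G → misereOutcome (H + -H) = Outcome.N) :
    ∀ X : PGame, Dicot X → misereOutcome (G + -G + X) = misereOutcome X := by
  intro X hXd
  have m := main G hf G X (Or.inl rfl) hXd
  have m' := main' G hf G X (Or.inl rfl) hXd
  apply misereOutcome_congr
  · exact ⟨fun hS => by_contra fun hX => m'.2 hX hS, m.1⟩
  · exact ⟨fun hS => by_contra fun hX => m.2 hX hS, m'.1⟩
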